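/- In every legal configuration of the edgeless cube Q_L accessible from the solved configuration f_solved, every non-center cluster contains exactly four cells of each of the six colors. -/

import Mathlib

universe u v

namespace InfRubik

/-- The three axes of the cube. -/
inductive Axis : Type
  | x | y | z
  deriving DecidableEq

/-- The six colors of the Rubik's cube.  A *configuration* is a map from cells to
`Option Color`, where `none` plays the role of the non-color `NaC`. -/
inductive Color : Type
  | red | white | green | orange | yellow | blue
  deriving DecidableEq

/-- The set `L̄† = -L ∪ {0} ∪ L ∪ {±∞}` of extended coordinates. -/
inductive ExtCoord (L : Type u) : Type u
  | neg : L → ExtCoord L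
  | zero : ExtCoord L
  | pos : L → ExtCoord L
  | negInf : ExtCoord L
  | posInf : ExtCoord L

namespace ExtCoord

variable {L : Type u}

/-- The reflection `r ↦ -r`. -/
def reflect : ExtCoord L → ExtCoord L
  | .neg r => .pos r
  | .zero => .zero
  | .pos r => .neg r
  | .negInf => .posInf
  | .posInf => .negInf

@[simp] theorem reflect_reflect (a : ExtCoord L) : a.reflect.reflect = a := by
  cases a <;> rfl

/-- Whether a coordinate is `±∞`. -/
def isInfB : ExtCoord L → Bool
  | .negInf => true
  | .posInf => true
  | _ => false

@[simp] theorem isInfB_reflect (a : ExtCoord L) : a.reflect.isInfB = a.isInfB := by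
  cases a <;> rfl

/-- Whether a coordinate is `0`. -/
def isZeroB : ExtCoord L → Bool
  | .zero => true
  | _ => false

@[simp] theorem isZeroB_reflect (a : ExtCoord L) : a.reflect.isZeroB = a.isZeroB := by
  cases a <;> rfl

end ExtCoord

/-- A point of the ambient space `L̄† × L̄† × L̄†`. -/
abbrev Triple (L : Type u) := ExtCoord L × ExtCoord L × ExtCoord L

/-- The coordinate of a point along an axis. -/
def Triple.coord {L : Type u} : Axis → Triple L → ExtCoord L
  | .x, p => p.1
  | .y, p => p.2.1
  | .z, p => p.2.2

/-- Quarter-turn rotation of the ambient space about an axis (right-hand rule). -/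
def rot {L : Type u} : Axis → Triple L → Triple L
  | .x, p => (p.1, p.2.2.reflect, p.2.1)
  | .y, p => (p.2.2, p.2.1, p.1.reflect)
  | .z, p => (p.2.1.reflect, p.1, p.2.2)

/-- Inverse quarter-turn rotation of the ambient space about an axis. -/
def rotInv {L : Type u} : Axis → Triple L → Triple L
  | .x, p => (p.1, p.2.2, p.2.1.reflect)
  | .y, p => (p.2.2.reflect, p.2.1, p.1)
  | .z, p => (p.2.1, p.1.reflect, p.2.2)

@[simp] theorem rotInv_rot {L : Type u} (i : Axis) (p : Triple L) : rotInv i (rot i p) = p := by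
  cases i <;> simp [rot, rotInv]

@[simp] theorem rot_rotInv {L : Type u} (i : Axis) (p : Triple L) : rot i (rotInv i p) = p := by
  cases i <;> simp [rot, rotInv]

/-- The number of infinite coordinates of a point. -/
def infCount {L : Type u} (p : Triple L) : ℕ :=
  (if p.1.isInfB then 1 else 0) + (if p.2.1.isInfB then 1 else 0) +
    (if p.2.2.isInfB then 1 else 0)

/-- The number of zero coordinates of a point. -/
def zeroCount {L : Type u} (p : Triple L) : ℕ :=
  (if p.1.isZeroB then 1 else 0) + (if p.2.1.isZeroB then 1 else 0) +
    (if p.2.2.isZeroB then 1 else 0)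

theorem infCount_rot {L : Type u} (i : Axis) (p : Triple L) : infCount (rot i p) = infCount p := by
  rcases p with ⟨a, b, c⟩
  cases i <;> cases a <;> cases b <;> cases c <;> rfl

theorem infCount_rotInv {L : Type u} (i : Axis) (p : Triple L) :
    infCount (rotInv i p) = infCount p := by
  rcases p with ⟨a, b, c⟩
  cases i <;> cases a <;> cases b <;> cases c <;> rfl

@[simp] theorem coord_rot_self {L : Type u} (i : Axis) (p : Triple L) :
    (rot i p).coord i = p.coord i := by
  cases i <;> rfl

@[simp] theorem coord_rotInv_self {L : Type u} (i : Axis) (p : Triple L) :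
    (rotInv i p).coord i = p.coord i := by
  cases i <;> rfl

/-- A cell of the *edgeless* cube `Q_L`: a point of the ambient space with exactly one
infinite coordinate. -/
def Cell (L : Type u) : Type u := {p : Triple L // infCount p = 1}

open Classical in
/-- The underlying map on points of the quarter-turn twist `T_{i,α}`. -/
noncomputable def qtTriple {L : Type u} (i : Axis) (α : ExtCoord L) (p : Triple L) : Triple L :=
  if p.coord i = α then rot i p else p

open Classical in
/-- The underlying map on points of the inverse quarter-turn twist `T_{i,α}⁻¹`. -/
noncomputable def qtTripleInv {L : Type u} (i : Axis) (α : ExtCoord L) (p : Triple L) : Triple L :=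
  if p.coord i = α then rotInv i p else p

theorem qtTripleInv_qtTriple {L : Type u} (i : Axis) (α : ExtCoord L) (p : Triple L) :
    qtTripleInv i α (qtTriple i α p) = p := by
  classical
  by_cases h : p.coord i = α <;> simp [qtTriple, qtTripleInv, h]

theorem qtTriple_qtTripleInv {L : Type u} (i : Axis) (α : ExtCoord L) (p : Triple L) :
    qtTriple i α (qtTripleInv i α p) = p := by
  classical
  by_cases h : p.coord i = α <;> simp [qtTriple, qtTripleInv, h]

theorem infCount_qtTriple {L : Type u} (i : Axis) (α : ExtCoord L) (p : Triple L) :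
    infCount (qtTriple i α p) = infCount p := by
  classical
  by_cases h : p.coord i = α <;> simp [qtTriple, h, infCount_rot]

theorem infCount_qtTripleInv {L : Type u} (i : Axis) (α : ExtCoord L) (p : Triple L) :
    infCount (qtTripleInv i α p) = infCount p := by
  classical
  by_cases h : p.coord i = α <;> simp [qtTripleInv, h, infCount_rotInv]

/-- The quarter-turn twist `T_{i,α}` of the edgeless cube, as a permutation of cells. -/
noncomputable def quarterTurn {L : Type u} (i : Axis) (α : ExtCoord L) : Equiv.Perm (Cell L) where
  toFun c := ⟨qtTriple i α c.1, by rw [infCount_qtTriple]; exact c.2⟩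
  invFun c := ⟨qtTripleInv i α c.1, by rw [infCount_qtTripleInv]; exact c.2⟩
  left_inv c := Subtype.ext (qtTripleInv_qtTriple i α c.1)
  right_inv c := Subtype.ext (qtTriple_qtTripleInv i α c.1)

/-- The basic twists of the edgeless cube: quarter turns, half turns and reverse
quarter turns of a single layer. -/
def IsBasic (L : Type u) (π : Equiv.Perm (Cell L)) : Prop :=
  ∃ (i : Axis) (α : ExtCoord L),
    π = quarterTurn i α ∨ π = quarterTurn i α ^ 2 ∨ π = (quarterTurn i α)⁻¹

/-! ### The edged cube -/

/-- How a quarter-turn about axis `i` transports the face tag of a cell. -/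
def tagMap : Axis → Axis → Axis
  | .x, .x => .x
  | .x, .y => .z
  | .x, .z => .y
  | .y, .x => .z
  | .y, .y => .y
  | .y, .z => .x
  | .z, .x => .y
  | .z, .y => .x
  | .z, .z => .z

@[simp] theorem tagMap_tagMap (i j : Axis) : tagMap i (tagMap i j) = j := by
  cases i <;> cases j <;> rfl

theorem isInfB_coord_tagMap_rot {L : Type u} (i j : Axis) (p : Triple L) :
    ((rot i p).coord (tagMap i j)).isInfB = (p.coord j).isInfB := by
  cases i <;> cases j <;> simp [rot, Triple.coord, tagMap]

theorem isInfB_coord_tagMap_rotInv {L : Type u} (i j : Axis) (p : Triple L) :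
    ((rotInv i p).coord (tagMap i j)).isInfB = (p.coord j).isInfB := by
  cases i <;> cases j <;> simp [rotInv, Triple.coord, tagMap]

/-- A cell of the *edged* cube `Q̄_L`: a point of the ambient space together with a tag
naming an axis, such that the coordinate along the tagged axis is infinite (the tag
indicates the face to which the cell belongs). -/
def ECell (L : Type u) : Type u := {q : Triple L × Axis // (q.1.coord q.2).isInfB = true}

open Classical in
/-- The underlying map of the quarter-turn twist `T_{i,α}` of the edged cube. -/
noncomputable def eqtFun {L : Type u} (i : Axis) (α : ExtCoord L) (q : Triple L × Axis) :
    Triple L × Axis :=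
  if q.1.coord i = α then (rot i q.1, tagMap i q.2) else q

open Classical in
/-- The underlying map of the reverse quarter-turn twist of the edged cube. -/
noncomputable def eqtFunInv {L : Type u} (i : Axis) (α : ExtCoord L) (q : Triple L × Axis) :
    Triple L × Axis :=
  if q.1.coord i = α then (rotInv i q.1, tagMap i q.2) else q

theorem eqtFunInv_eqtFun {L : Type u} (i : Axis) (α : ExtCoord L) (q : Triple L × Axis) :
    eqtFunInv i α (eqtFun i α q) = q := by
  classical
  by_cases h : q.1.coord i = α <;> simp [eqtFun, eqtFunInv, h]

theorem eqtFun_eqtFunInv {L : Type u} (i : Axis) (α : ExtCoord L) (q : Triple L × Axis) :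
    eqtFun i α (eqtFunInv i α q) = q := by
  classical
  by_cases h : q.1.coord i = α <;> simp [eqtFun, eqtFunInv, h]

theorem isInfB_eqtFun {L : Type u} (i : Axis) (α : ExtCoord L) (q : Triple L × Axis) :
    (((eqtFun i α q).1.coord (eqtFun i α q).2)).isInfB = ((q.1.coord q.2)).isInfB := by
  classical
  by_cases h : q.1.coord i = α <;> simp [eqtFun, h, isInfB_coord_tagMap_rot]

theorem isInfB_eqtFunInv {L : Type u} (i : Axis) (α : ExtCoord L) (q : Triple L × Axis) :
    (((eqtFunInv i α q).1.coord (eqtFunInv i α q).2)).isInfB = ((q.1.coord q.2)).isInfB := by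
  classical
  by_cases h : q.1.coord i = α <;> simp [eqtFunInv, h, isInfB_coord_tagMap_rotInv]

/-- The quarter-turn twist `T_{i,α}` of the edged cube, as a permutation of cells.  A face
twist moves, besides the cells of its face, also the coupled edge and corner cells of the
adjacent faces lying in the twisted layer. -/
noncomputable def equarterTurn {L : Type u} (i : Axis) (α : ExtCoord L) :
    Equiv.Perm (ECell L) where
  toFun c := ⟨eqtFun i α c.1, by rw [isInfB_eqtFun]; exact c.2⟩
  invFun c := ⟨eqtFunInv i α c.1, by rw [isInfB_eqtFunInv]; exact c.2⟩
  left_inv c := Subtype.ext (eqtFunInv_eqtFun i α c.1)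
  right_inv c := Subtype.ext (eqtFun_eqtFunInv i α c.1)

/-- The basic twists of the edged cube. -/
def IsEBasic (L : Type u) (π : Equiv.Perm (ECell L)) : Prop :=
  ∃ (i : Axis) (α : ExtCoord L),
    π = equarterTurn i α ∨ π = equarterTurn i α ^ 2 ∨ π = (equarterTurn i α)⁻¹

/-! ### Transfinite sequences of twists and their action on labellings -/

open Classical in
/-- The eventual value of an ordinal-indexed family of `Option`-values: `some v` if the family
stabilizes on `some v` before `lam`, and `none` otherwise. -/
noncomputable def eventualVal {X : Type u} (lam : Ordinal.{v})
    (g : ∀ η, η < lam → Option X) : Option X :=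
  if h : ∃ v : X, ∃ γ, γ < lam ∧ ∀ η (hη : η < lam), γ ≤ η → g η hη = some v
  then some h.choose else none

/-- Applying an ordinal-indexed sequence of permutations to an initial labelling:
`run σ f0 θ` is the labelling obtained after the first `θ` moves, with
`f_{η+1}(c) = f_η(σ_η⁻¹ c)` at successors and the eventual value (or `NaC = none`)
at limits. -/
noncomputable def run {Cl : Type v} {X : Type u} (σ : Ordinal.{v} → Equiv.Perm Cl)
    (f0 : Cl → Option X) (θ : Ordinal.{v}) : Cl → Option X :=
  Ordinal.limitRecOn (motive := fun _ => Cl → Option X) θ f0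
    (fun η fη c => fη ((σ η)⁻¹ c))
    (fun lam _ prev c => eventualVal lam (fun η h => prev η h c))

/-- A (transfinite) sequence of twists of length `len`, each of which satisfies the
predicate `B` (being a basic twist). -/
structure TwistSeq (Cl : Type v) (B : Equiv.Perm Cl → Prop) : Type (v + 1) where
  len : Ordinal.{v}
  seq : Ordinal.{v} → Equiv.Perm Cl
  basic : ∀ η, η < len → B (seq η)

namespace TwistSeq

variable {Cl : Type v} {B : Equiv.Perm Cl → Prop}

/-- The terminal labelling obtained by applying a sequence of twists to `f0`. -/
noncomputable def terminal (s : TwistSeq Cl B) {X : Type u} (f0 : Cl → Option X) :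
    Cl → Option X :=
  run s.seq f0 s.len

/-- A sequence of twists is convergent over `f0` if the terminal labelling is legal,
i.e. never takes the value `NaC = none`. -/
def ConvOver (s : TwistSeq Cl B) {X : Type u} (f0 : Cl → Option X) : Prop :=
  ∀ c, s.terminal f0 c ≠ none

/-- A sequence of twists is universally convergent if it is convergent over the identity
labelling. -/
def UnivConv (s : TwistSeq Cl B) : Prop := s.ConvOver (fun c => some c)

/-- A sequence is twist-finite if each twist occurs in it only finitely many times. -/
def TwistFinite (s : TwistSeq Cl B) : Prop :=
  ∀ π : Equiv.Perm Cl, {η : Ordinal | η < s.len ∧ s.seq η = π}.Finite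

/-- Two sequences are equivalent, `σ⃗ ∼ τ⃗`, when they produce the same terminal
configuration over every initial configuration. -/
def Sim (s t : TwistSeq Cl B) : Prop :=
  ∀ f : Cl → Option Color, s.terminal f = t.terminal f

/-- Concatenation of twist sequences: `s.concat t` performs `s` and then `t`. -/
noncomputable def concat (s t : TwistSeq Cl B) : TwistSeq Cl B where
  len := s.len + t.len
  seq := fun η => if η < s.len then s.seq η else t.seq (η - s.len)
  basic := by
    intro η hη
    by_cases h : η < s.len
    · simpa [h] using s.basic η h
    · have hc : 0 < t.len := by
        rcases eq_zero_or_pos t.len with h0 | h0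
        · rw [h0, add_zero] at hη; exact absurd hη h
        · exact h0
      have h2 : η - s.len < t.len := Ordinal.sub_lt_of_lt_add hη hc
      simpa [h] using t.basic _ h2

/-- The empty sequence of twists. -/
def empty (Cl : Type v) (B : Equiv.Perm Cl → Prop) : TwistSeq Cl B where
  len := 0
  seq := fun _ => 1
  basic := fun η hη => absurd hη (by simp)

/-- `n`-fold self-concatenation of a sequence of twists. -/
noncomputable def npow (s : TwistSeq Cl B) : ℕ → TwistSeq Cl B
  | 0 => empty Cl B
  | n + 1 => (npow s n).concat s

end TwistSeq

/-- Basic sequences of twists of the edgeless cube `Q_L`. -/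
abbrev BasicSeq (L : Type u) := TwistSeq (Cell L) (IsBasic L)

/-- Basic sequences of twists of the edged cube `Q̄_L`. -/
abbrev EBasicSeq (L : Type u) := TwistSeq (ECell L) (IsEBasic L)

/-- `f` is accessible from `f0` when some basic sequence applied to `f0` is convergent with
terminal configuration `f`. -/
def Accessible {Cl : Type v} (B : Equiv.Perm Cl → Prop) (f0 f : Cl → Option Color) : Prop :=
  ∃ s : TwistSeq Cl B, s.ConvOver f0 ∧ s.terminal f0 = f

/-- A labelling is legal if it never takes the value `NaC = none`. -/
def IsLegal {Cl : Type v} {X : Type u} (f : Cl → Option X) : Prop := ∀ c, f c ≠ none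

/-! ### Clusters, faces, and distinguished configurations -/

/-- The group of permutations of cells of the edgeless cube generated by the basic twists. -/
def twistGroup (L : Type u) : Subgroup (Equiv.Perm (Cell L)) :=
  Subgroup.closure {π | IsBasic L π}

/-- The cluster of a cell of the edgeless cube: its orbit under the group generated by the
basic twists. -/
def cluster {L : Type u} (c : Cell L) : Set (Cell L) :=
  {d | ∃ g ∈ twistGroup L, g c = d}

/-- The group of permutations of cells of the edged cube generated by the basic twists. -/
def etwistGroup (L : Type u) : Subgroup (Equiv.Perm (ECell L)) :=
  Subgroup.closure {π | IsEBasic L π}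

/-- The cluster of a cell of the edged cube. -/
def ecluster {L : Type u} (c : ECell L) : Set (ECell L) :=
  {d | ∃ g ∈ etwistGroup L, g c = d}

open Classical in
/-- The solved configuration of the edgeless cube: each face gets one of six distinct
colors. -/
noncomputable def fSolved (L : Type u) : Cell L → Option Color := fun c =>
  if c.1.1 = ExtCoord.posInf then some .red
  else if c.1.1 = ExtCoord.negInf then some .orange
  else if c.1.2.1 = ExtCoord.posInf then some .blue
  else if c.1.2.1 = ExtCoord.negInf then some .green
  else if c.1.2.2 = ExtCoord.posInf then some .white
  else some .yellow

/-- The color of each face: the face is named by the axis and the sign (`true` = `+∞`). -/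
def faceColor : Axis → Bool → Color
  | .x, true => .red
  | .x, false => .orange
  | .y, true => .blue
  | .y, false => .green
  | .z, true => .white
  | .z, false => .yellow

open Classical in
/-- The solved configuration of the edged cube. -/
noncomputable def efSolved (L : Type u) : ECell L → Option Color := fun c =>
  if c.1.1.coord c.1.2 = ExtCoord.posInf then some (faceColor c.1.2 true)
  else some (faceColor c.1.2 false)

/-- A center cell of the edgeless cube: two of its coordinates are `0`. -/
def IsCenter {L : Type u} (c : Cell L) : Prop := zeroCount c.1 = 2

/-- The global rotation of the whole cube about an axis, as a permutation of the cells of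
the edgeless cube. -/
def rotAllPerm {L : Type u} (i : Axis) : Equiv.Perm (Cell L) where
  toFun c := ⟨rot i c.1, by rw [infCount_rot]; exact c.2⟩
  invFun c := ⟨rotInv i c.1, by rw [infCount_rotInv]; exact c.2⟩
  left_inv c := Subtype.ext (rotInv_rot i c.1)
  right_inv c := Subtype.ext (rot_rotInv i c.1)

/-- The group of global rotations of the edgeless cube. -/
def rotGroup (L : Type u) : Subgroup (Equiv.Perm (Cell L)) :=
  Subgroup.closure (Set.range (rotAllPerm (L := L)))

/-- A configuration of the edgeless cube is standard if every non-center cluster contains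
exactly four cells of each of the six colors, and its restriction to the center cluster is
obtained from the solved configuration by a global rotation of the cube. -/
def Standard {L : Type u} (f : Cell L → Option Color) : Prop :=
  (∀ c : Cell L, ¬IsCenter c → ∀ γ : Color, {d ∈ cluster c | f d = some γ}.ncard = 4) ∧
  ∃ g ∈ rotGroup L, ∀ d : Cell L, IsCenter d → f d = fSolved L (g⁻¹ d)

/-- A configuration is invariant under all quarter-turn face twists. -/
def FaceInvariant {L : Type u} (f : Cell L → Option Color) : Prop :=
  ∀ (i : Axis) (α : ExtCoord L), α.isInfB = true →
    ∀ c : Cell L, f ((quarterTurn i α)⁻¹ c) = f c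

/-! ### Quadrants and cluster configurations -/

/-- The upper-right quadrant `D` of the Front face: the cells `(x, y, +∞)` with `x ∈ L`
and `y ∈ {0} ∪ L`; every non-center cluster has a unique representative in `D`. -/
def Dset (L : Type u) : Set (Cell L) :=
  {c | ∃ (a : L) (b : ExtCoord L), (b = ExtCoord.zero ∨ ∃ r : L, b = ExtCoord.pos r) ∧
    c.1 = (ExtCoord.pos a, b, ExtCoord.posInf)}

/-- Two cells lie in the same face quadrant (an image of `D` under a global rotation). -/
def SameQuadrant {L : Type u} (d d' : Cell L) : Prop :=
  ∃ g ∈ rotGroup L, d ∈ (fun c => g c) '' Dset L ∧ d' ∈ (fun c => g c) '' Dset L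

/-! ### Coupled cells of the edged cube -/

/-- Two cells of the edged cube are coupled if they occupy the same location but belong to
different faces (they are parts of a common edge or corner cubie). -/
def Coupled {L : Type u} (c c' : ECell L) : Prop := c.1.1 = c'.1.1 ∧ c.1.2 ≠ c'.1.2

/-- An edge cell: exactly two infinite coordinates. -/
def IsEdgeCell {L : Type u} (c : ECell L) : Prop := infCount c.1.1 = 2

/-- A corner cell: three infinite coordinates. -/
def IsCornerCell {L : Type u} (c : ECell L) : Prop := infCount c.1.1 = 3

/-- An edge-cross cell: an edge cell one of whose coordinates is `0`. -/
def IsEdgeCross {L : Type u} (c : ECell L) : Prop :=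
  IsEdgeCell c ∧ 0 < zeroCount c.1.1

end InfRubik
/-! ### Auxiliary development for `four_of_each_color` -/

namespace InfRubik

open ExtCoord

variable {L : Type u}

section Invariants

/-- `1` if the coordinate is `±r`, else `0`. -/
noncomputable def aInd (r : L) : ExtCoord L → ℕ
  | .pos x => by classical exact if x = r then 1 else 0
  | .neg x => by classical exact if x = r then 1 else 0
  | _ => 0

/-- Number of coordinates equal to `±r`. -/
noncomputable def cntAbs (p : Triple L) (r : L) : ℕ :=
  aInd r p.1 + aInd r p.2.1 + aInd r p.2.2

/-- Sign of an infinite coordinate. -/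
def f1 : ExtCoord L → ℤ
  | .posInf => 1
  | .negInf => -1
  | _ => 0

/-- Signed indicator of `±r`. -/
noncomputable def f2 (r : L) : ExtCoord L → ℤ
  | .pos x => by classical exact if x = r then 1 else 0
  | .neg x => by classical exact if x = r then -1 else 0
  | _ => 0

/-- The `2 × 2` determinant used in the chirality invariant. -/
noncomputable def d2 (s t : L) (a b : ExtCoord L) : ℤ :=
  f2 s a * f2 t b - f2 t a * f2 s b

/-- The chirality invariant. -/
noncomputable def detM (p : Triple L) (s t : L) : ℤ :=
  f1 p.1 * d2 s t p.2.1 p.2.2 - f1 p.2.1 * d2 s t p.1 p.2.2 + f1 p.2.2 * d2 s t p.1 p.2.1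

@[simp] lemma reflect_pos (r : L) : (pos r).reflect = neg r := rfl
@[simp] lemma reflect_neg (r : L) : (neg r).reflect = pos r := rfl
@[simp] lemma reflect_zero : (zero : ExtCoord L).reflect = zero := rfl
@[simp] lemma reflect_posInf : (posInf : ExtCoord L).reflect = negInf := rfl
@[simp] lemma reflect_negInf : (negInf : ExtCoord L).reflect = posInf := rfl

@[simp] lemma aInd_reflect (r : L) (a : ExtCoord L) : aInd r a.reflect = aInd r a := by
  cases a <;> rfl

@[simp] lemma f1_reflect (a : ExtCoord L) : f1 a.reflect = -f1 a := by
  cases a <;> rfl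

@[simp] lemma f2_reflect (r : L) (a : ExtCoord L) : f2 r a.reflect = -f2 r a := by
  cases a <;> simp [f2, reflect] <;> split <;> rfl

lemma d2_reflect_right (s t : L) (a b : ExtCoord L) :
    d2 s t a b.reflect = -d2 s t a b := by
  simp [d2]; ring

lemma d2_reflect_left (s t : L) (a b : ExtCoord L) :
    d2 s t a.reflect b = -d2 s t a b := by
  simp [d2]; ring

/-- The full invariant. -/
noncomputable def Phi (p : Triple L) : ℕ × (L → ℕ) × (L → L → ℤ) :=
  (zeroCount p, fun r => cntAbs p r, fun s t => detM p s t)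

lemma zeroCount_rot (i : Axis) (p : Triple L) : zeroCount (rot i p) = zeroCount p := by
  rcases p with ⟨a, b, c⟩
  cases i <;> cases a <;> cases b <;> cases c <;> rfl

lemma cntAbs_rot (i : Axis) (p : Triple L) (r : L) : cntAbs (rot i p) r = cntAbs p r := by
  cases i <;> simp [rot, cntAbs] <;> omega

lemma detM_rot (i : Axis) (p : Triple L) (s t : L) : detM (rot i p) s t = detM p s t := by
  cases i <;> simp [rot, detM, d2] <;> ring

lemma Phi_rot (i : Axis) (p : Triple L) : Phi (rot i p) = Phi p := by
  unfold Phi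
  refine Prod.ext ?_ (Prod.ext ?_ ?_)
  · simp [zeroCount_rot]
  · funext r; simp [cntAbs_rot]
  · funext s t; simp [detM_rot]

lemma Phi_qtTriple (i : Axis) (α : ExtCoord L) (p : Triple L) :
    Phi (qtTriple i α p) = Phi p := by
  unfold qtTriple
  split
  · exact Phi_rot i p
  · rfl

lemma quarterTurn_val (i : Axis) (α : ExtCoord L) (d : Cell L) :
    (quarterTurn i α d).1 = qtTriple i α d.1 := rfl

lemma Phi_quarterTurn (i : Axis) (α : ExtCoord L) (d : Cell L) :
    Phi ((quarterTurn i α d).1) = Phi d.1 := by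
  rw [quarterTurn_val, Phi_qtTriple]

lemma Phi_twistGroup {g : Equiv.Perm (Cell L)} (hg : g ∈ twistGroup L) (d : Cell L) :
    Phi ((g d).1) = Phi d.1 := by
  revert d
  refine Subgroup.closure_induction (p := fun g _ => ∀ d : Cell L, Phi ((g d).1) = Phi d.1)
    ?_ (by intro d; rfl) ?_ ?_ hg
  · rintro x ⟨i, α, h | h | h⟩ d
    · subst h; exact Phi_quarterTurn i α d
    · subst h
      rw [pow_two]
      rw [Equiv.Perm.mul_apply]
      rw [Phi_quarterTurn, Phi_quarterTurn]
    · subst h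
      have h1 := Phi_quarterTurn i α ((quarterTurn i α)⁻¹ d)
      rw [Equiv.Perm.coe_inv, Equiv.apply_symm_apply] at h1
      exact h1.symm
  · intro x y _ _ hx hy d
    rw [Equiv.Perm.mul_apply, hx, hy]
  · intro x _ hx d
    have h1 := hx (x⁻¹ d)
    rw [Equiv.Perm.coe_inv, Equiv.apply_symm_apply] at h1
    exact h1.symm

end Invariants

section ClusterBasics

lemma isBasic_mem_twistGroup {π : Equiv.Perm (Cell L)} (h : IsBasic L π) :
    π ∈ twistGroup L := by
  obtain ⟨i, α, h | h | h⟩ := h <;>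
  · have hq : quarterTurn i α ∈ twistGroup L :=
      Subgroup.subset_closure (show IsBasic L (quarterTurn i α) from ⟨i, α, Or.inl rfl⟩)
    subst h
    first
      | exact hq
      | exact pow_mem hq 2
      | exact inv_mem hq

lemma mem_cluster_self (c : Cell L) : c ∈ cluster c := ⟨1, one_mem _, rfl⟩

lemma Phi_of_mem_cluster {c d : Cell L} (h : d ∈ cluster c) : Phi d.1 = Phi c.1 := by
  obtain ⟨g, hg, rfl⟩ := h
  exact Phi_twistGroup hg c

lemma mem_cluster_iff_of_mem {c : Cell L} {g : Equiv.Perm (Cell L)}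
    (hg : g ∈ twistGroup L) (d : Cell L) : d ∈ cluster c ↔ g d ∈ cluster c := by
  constructor
  · rintro ⟨h, hh, rfl⟩; exact ⟨g * h, mul_mem hg hh, rfl⟩
  · rintro ⟨h, hh, hhd⟩
    refine ⟨g⁻¹ * h, mul_mem (inv_mem hg) hh, ?_⟩
    rw [Equiv.Perm.mul_apply, hhd, Equiv.Perm.coe_inv, Equiv.symm_apply_apply]

lemma cluster_eq_of_mem {c d : Cell L} (h : d ∈ cluster c) : cluster d = cluster c := by
  obtain ⟨g, hg, rfl⟩ := h
  ext e
  constructor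
  · rintro ⟨h', hh', rfl⟩
    exact ⟨h' * g, mul_mem hh' hg, rfl⟩
  · rintro ⟨h', hh', rfl⟩
    refine ⟨h' * g⁻¹, mul_mem hh' (inv_mem hg), ?_⟩
    simp [Equiv.Perm.mul_apply]

/-- Propagating cluster membership through an ambient rotation of a layer. -/
lemma rot_mem_cluster {c d : Cell L} (hd : d ∈ cluster c) (i : Axis) (e : Cell L)
    (he : e.1 = rot i d.1) : e ∈ cluster c := by
  obtain ⟨g, hg, rfl⟩ := hd
  refine ⟨quarterTurn i ((g c).1.coord i) * g,
    mul_mem (Subgroup.subset_closure ⟨i, _, Or.inl rfl⟩) hg, ?_⟩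
  rw [Equiv.Perm.mul_apply]
  refine (Subtype.ext ?_).symm
  rw [he, quarterTurn_val]
  unfold qtTriple
  rw [if_pos rfl]

/-- `M c q` : every cell whose value is `q` belongs to the cluster of `c`. -/
def M (c : Cell L) (q : Triple L) : Prop := ∀ e : Cell L, e.1 = q → e ∈ cluster c

lemma M_rot {c : Cell L} {q : Triple L} (h : M c q) (i : Axis) : M c (rot i q) := by
  intro e he
  have hq : infCount q = 1 := by
    rw [← infCount_rot i q, ← he]; exact e.2
  exact rot_mem_cluster (h ⟨q, hq⟩ rfl) i e he

end ClusterBasics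

section Dynamics

lemma run_zero {Cl : Type v} {X : Type u} (σ : Ordinal.{v} → Equiv.Perm Cl)
    (f0 : Cl → Option X) : run σ f0 0 = f0 :=
  Ordinal.limitRecOn_zero _ _ _

lemma run_succ {Cl : Type v} {X : Type u} (σ : Ordinal.{v} → Equiv.Perm Cl)
    (f0 : Cl → Option X) (η : Ordinal.{v}) :
    run σ f0 (Order.succ η) = fun c => run σ f0 η ((σ η)⁻¹ c) :=
  Ordinal.limitRecOn_succ _ _ _ _

lemma run_limit {Cl : Type v} {X : Type u} (σ : Ordinal.{v} → Equiv.Perm Cl)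
    (f0 : Cl → Option X) {lam : Ordinal.{v}} (h : Order.IsSuccLimit lam) :
    run σ f0 lam = fun c => eventualVal lam (fun η _ => run σ f0 η c) :=
  Ordinal.limitRecOn_limit _ _ _ _ h

lemma eventualVal_eq_some {X : Type u} {lam : Ordinal.{v}} {g : ∀ η, η < lam → Option X}
    {v : X} (h : eventualVal lam g = some v) :
    ∃ γ, γ < lam ∧ ∀ η (hη : η < lam), γ ≤ η → g η hη = some v := by
  classical
  unfold eventualVal at h
  split at h
  · rename_i hex
    obtain ⟨γ, hγ, hall⟩ := hex.choose_spec
    obtain rfl : hex.choose = v := by injection h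
    exact ⟨γ, hγ, hall⟩
  · exact absurd h (by simp)

lemma counts_le (C : Set (Cell L)) (hfin : C.Finite)
    (hinvC : ∀ g ∈ twistGroup L, ∀ d : Cell L, d ∈ C ↔ g d ∈ C)
    (σ : Ordinal.{u} → Equiv.Perm (Cell L)) (θ : Ordinal.{u})
    (hbasic : ∀ η, η < θ → IsBasic L (σ η)) (f0 : Cell L → Option Color)
    (hinit : ∀ γ : Color, {d ∈ C | f0 d = some γ}.ncard ≤ 4) :
    ∀ η, η ≤ θ → ∀ γ : Color, {d ∈ C | run σ f0 η d = some γ}.ncard ≤ 4 := by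
  intro η
  induction η using Ordinal.limitRecOn with
  | zero => intro _ γ; rw [run_zero]; exact hinit γ
  | add_one η ih =>
    rw [Ordinal.add_one_eq_succ]
    intro hle γ
    have hηθ : η < θ := lt_of_lt_of_le (Order.lt_succ η) hle
    have hπ : σ η ∈ twistGroup L := isBasic_mem_twistGroup (hbasic η hηθ)
    rw [run_succ]
    have himg : {d ∈ C | run σ f0 η ((σ η)⁻¹ d) = some γ}
        = (σ η) '' {d ∈ C | run σ f0 η d = some γ} := by
      ext d
      simp only [Set.mem_setOf_eq, Set.mem_image]
      constructor
      · rintro ⟨hdC, hval⟩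
        refine ⟨(σ η)⁻¹ d, ⟨?_, hval⟩, by simp⟩
        have := hinvC (σ η) hπ ((σ η)⁻¹ d)
        simp at this
        exact this.mpr hdC
      · rintro ⟨e, ⟨heC, hval⟩, rfl⟩
        refine ⟨(hinvC (σ η) hπ e).mp heC, by simpa using hval⟩
    rw [himg, Set.ncard_image_of_injective _ (σ η).injective]
    exact ih hηθ.le γ
  | limit lam hlim ih =>
    intro hle γ
    rw [run_limit σ f0 hlim]
    classical
    set T := {d ∈ C | eventualVal lam (fun η _ => run σ f0 η d) = some γ} with hT
    have hTsub : T ⊆ C := fun d hd => hd.1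
    have hTfin : T.Finite := hfin.subset hTsub
    have hstage : ∀ d, d ∈ T → ∃ γ0, γ0 < lam ∧ ∀ η (hη : η < lam), γ0 ≤ η →
        run σ f0 η d = some γ := by
      intro d hd
      exact eventualVal_eq_some hd.2
    choose g hg1 hg2 using hstage
    set G : Cell L → Ordinal.{u} := fun d => if hd : d ∈ T then g d hd else 0 with hG
    set η0 : Ordinal.{u} := hTfin.toFinset.sup G with hη0
    have hη0lt : η0 < lam := by
      rw [hη0]
      apply Finset.sup_lt_iff (by exact hlim.pos) |>.mpr
      intro d hd
      rw [Set.Finite.mem_toFinset] at hd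
      simp only [hG]
      rw [dif_pos hd]
      exact hg1 d hd
    have hsub2 : T ⊆ {d ∈ C | run σ f0 η0 d = some γ} := by
      intro d hd
      refine ⟨hd.1, ?_⟩
      apply hg2 d hd η0 hη0lt
      have : G d ≤ η0 := Finset.le_sup (hTfin.mem_toFinset.mpr hd)
      simp only [hG] at this
      rwa [dif_pos hd] at this
    calc T.ncard ≤ {d ∈ C | run σ f0 η0 d = some γ}.ncard :=
          Set.ncard_le_ncard hsub2 (hfin.subset (fun d hd => hd.1))
      _ ≤ 4 := ih η0 hη0lt ((hη0lt.trans_le hle).le) γ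

end Dynamics

section Statics

/-- Cells whose value lies in a given set of triples. -/
def cellsOf (T : Set (Triple L)) : Set (Cell L) := {d | d.1 ∈ T}

def Fzp (u v : ExtCoord L) : Set (Triple L) :=
  {(u, v, posInf), (v.reflect, u, posInf), (u.reflect, v.reflect, posInf), (v, u.reflect, posInf)}
def Fym (u v : ExtCoord L) : Set (Triple L) :=
  {(u, negInf, v), (v, negInf, u.reflect), (u.reflect, negInf, v.reflect), (v.reflect, negInf, u)}
def Fzm (u v : ExtCoord L) : Set (Triple L) :=
  {(u, v.reflect, negInf), (v, u, negInf), (u.reflect, v, negInf), (v.reflect, u.reflect, negInf)}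
def Fyp (u v : ExtCoord L) : Set (Triple L) :=
  {(u, posInf, v.reflect), (v.reflect, posInf, u.reflect), (u.reflect, posInf, v), (v, posInf, u)}
def Fxp (u v : ExtCoord L) : Set (Triple L) :=
  {(posInf, v, u.reflect), (posInf, u, v), (posInf, v.reflect, u), (posInf, u.reflect, v.reflect)}
def Fxm (u v : ExtCoord L) : Set (Triple L) :=
  {(negInf, v, u), (negInf, u.reflect, v), (negInf, v.reflect, u.reflect), (negInf, u, v.reflect)}

def Sfull (u v : ExtCoord L) : Set (Triple L) :=
  Fzp u v ∪ Fym u v ∪ Fzm u v ∪ Fyp u v ∪ Fxp u v ∪ Fxm u v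

/-- The face of a color, relative to the quadruple data `u v`. -/
def Fc (u v : ExtCoord L) : Color → Set (Triple L)
  | .white => Fzp u v
  | .green => Fym u v
  | .yellow => Fzm u v
  | .blue => Fyp u v
  | .red => Fxp u v
  | .orange => Fxm u v

lemma Sfull_sub_cluster {c : Cell L} {u v : ExtCoord L} (hc : c.1 = (u, v, posInf)) :
    ∀ p ∈ Sfull u v, M c p := by
  have hzp1 : M c (u, v, posInf) := fun e he => by
    have : e = c := Subtype.ext (by rw [he, hc])
    rw [this]; exact mem_cluster_self c
  have hzp2 : M c (v.reflect, u, posInf) := by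
    simpa only [rot, reflect_reflect] using M_rot hzp1 Axis.z
  have hzp3 : M c (u.reflect, v.reflect, posInf) := by
    simpa only [rot, reflect_reflect] using M_rot hzp2 Axis.z
  have hzp4 : M c (v, u.reflect, posInf) := by
    simpa only [rot, reflect_reflect] using M_rot hzp3 Axis.z
  have hym1 : M c (u, negInf, v) := by
    simpa only [rot, reflect_reflect, reflect_posInf] using M_rot hzp1 Axis.x
  have hym2 : M c (v, negInf, u.reflect) := by
    simpa only [rot, reflect_reflect] using M_rot hym1 Axis.y
  have hym3 : M c (u.reflect, negInf, v.reflect) := by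
    simpa only [rot, reflect_reflect] using M_rot hym2 Axis.y
  have hym4 : M c (v.reflect, negInf, u) := by
    simpa only [rot, reflect_reflect] using M_rot hym3 Axis.y
  have hzm1 : M c (u, v.reflect, negInf) := by
    simpa only [rot, reflect_reflect] using M_rot hym1 Axis.x
  have hzm2 : M c (v, u, negInf) := by
    simpa only [rot, reflect_reflect] using M_rot hzm1 Axis.z
  have hzm3 : M c (u.reflect, v, negInf) := by
    simpa only [rot, reflect_reflect] using M_rot hzm2 Axis.z
  have hzm4 : M c (v.reflect, u.reflect, negInf) := by
    simpa only [rot, reflect_reflect] using M_rot hzm3 Axis.z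
  have hyp1 : M c (u, posInf, v.reflect) := by
    simpa only [rot, reflect_reflect, reflect_negInf] using M_rot hzm1 Axis.x
  have hyp2 : M c (v.reflect, posInf, u.reflect) := by
    simpa only [rot, reflect_reflect] using M_rot hyp1 Axis.y
  have hyp3 : M c (u.reflect, posInf, v) := by
    simpa only [rot, reflect_reflect] using M_rot hyp2 Axis.y
  have hyp4 : M c (v, posInf, u) := by
    simpa only [rot, reflect_reflect] using M_rot hyp3 Axis.y
  have hxp1 : M c (posInf, v, u.reflect) := by
    simpa only [rot, reflect_reflect] using M_rot hzp1 Axis.y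
  have hxp2 : M c (posInf, u, v) := by
    simpa only [rot, reflect_reflect] using M_rot hxp1 Axis.x
  have hxp3 : M c (posInf, v.reflect, u) := by
    simpa only [rot, reflect_reflect] using M_rot hxp2 Axis.x
  have hxp4 : M c (posInf, u.reflect, v.reflect) := by
    simpa only [rot, reflect_reflect] using M_rot hxp3 Axis.x
  have hxm0 : M c (u.reflect, v, negInf) := hzm3
  have hxm1 : M c (negInf, v, u) := by
    simpa only [rot, reflect_reflect] using M_rot hxm0 Axis.y
  have hxm2 : M c (negInf, u.reflect, v) := by
    simpa only [rot, reflect_reflect] using M_rot hxm1 Axis.x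
  have hxm3 : M c (negInf, v.reflect, u.reflect) := by
    simpa only [rot, reflect_reflect] using M_rot hxm2 Axis.x
  have hxm4 : M c (negInf, u, v.reflect) := by
    simpa only [rot, reflect_reflect] using M_rot hxm3 Axis.x
  intro p hp
  simp only [Sfull, Fzp, Fym, Fzm, Fyp, Fxp, Fxm, Set.union_def, Set.mem_setOf_eq,
    Set.mem_insert_iff, Set.mem_singleton_iff] at hp
  rcases hp with (((((rfl|rfl|rfl|rfl)|(rfl|rfl|rfl|rfl))|(rfl|rfl|rfl|rfl))|(rfl|rfl|rfl|rfl))|(rfl|rfl|rfl|rfl))|(rfl|rfl|rfl|rfl) <;>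
    assumption

end Statics

section Counting

lemma ne_inf {a : ExtCoord L} (h : a.isInfB = false) : a ≠ posInf ∧ a ≠ negInf := by
  cases a <;> simp_all [isInfB]

lemma reflect_eq_zero {a : ExtCoord L} : a.reflect = zero ↔ a = zero := by
  cases a <;> simp [reflect]

lemma pair_ne (u v : ExtCoord L) (h0 : ¬(u = zero ∧ v = zero)) :
    ((u, v) ≠ (v.reflect, u)) ∧ ((u, v) ≠ (u.reflect, v.reflect)) ∧ ((u, v) ≠ (v, u.reflect)) ∧
    ((v.reflect, u) ≠ (u.reflect, v.reflect)) ∧ ((v.reflect, u) ≠ (v, u.reflect)) ∧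
    ((u.reflect, v.reflect) ≠ (v, u.reflect)) := by
  cases u <;> cases v <;> simp_all [reflect, Prod.ext_iff]

lemma liftA {a b c d : ExtCoord L} (h : ((a, b) : ExtCoord L × ExtCoord L) ≠ (c, d))
    (w : ExtCoord L) : ((a, b, w) : Triple L) ≠ (c, d, w) := by
  simp only [ne_eq, Prod.mk.injEq] at h ⊢; tauto

lemma liftB {a b c d : ExtCoord L} (h : ((a, b) : ExtCoord L × ExtCoord L) ≠ (c, d))
    (w : ExtCoord L) : ((a, w, b) : Triple L) ≠ (c, w, d) := by
  simp only [ne_eq, Prod.mk.injEq] at h ⊢; tauto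

lemma liftC {a b c d : ExtCoord L} (h : ((a, b) : ExtCoord L × ExtCoord L) ≠ (c, d))
    (w : ExtCoord L) : ((w, a, b) : Triple L) ≠ (w, c, d) := by
  simp only [ne_eq, Prod.mk.injEq] at h ⊢; tauto

lemma ncard_four {α : Type*} {a b c d : α} (h1 : a ≠ b) (h2 : a ≠ c) (h3 : a ≠ d)
    (h4 : b ≠ c) (h5 : b ≠ d) (h6 : c ≠ d) : ({a, b, c, d} : Set α).ncard = 4 := by
  have fd : ({d} : Set α).Finite := Set.finite_singleton d
  rw [Set.ncard_insert_of_notMem (by simp [h1, h2, h3]) ((fd.insert c).insert b),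
    Set.ncard_insert_of_notMem (by simp [h4, h5]) (fd.insert c),
    Set.ncard_insert_of_notMem (by simp [h6]) fd, Set.ncard_singleton]

lemma infc_ffi {a b w : ExtCoord L} (ha : a.isInfB = false) (hb : b.isInfB = false)
    (hw : w.isInfB = true) : infCount (a, b, w) = 1 := by
  simp [infCount, ha, hb, hw]

lemma infc_fif {a b w : ExtCoord L} (ha : a.isInfB = false) (hb : b.isInfB = false)
    (hw : w.isInfB = true) : infCount (a, w, b) = 1 := by
  simp [infCount, ha, hb, hw]

lemma infc_iff {a b w : ExtCoord L} (ha : a.isInfB = false) (hb : b.isInfB = false)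
    (hw : w.isInfB = true) : infCount (w, a, b) = 1 := by
  simp [infCount, ha, hb, hw]

lemma ncard_cellsOf_four {p1 p2 p3 p4 : Triple L} (h1 : infCount p1 = 1) (h2 : infCount p2 = 1)
    (h3 : infCount p3 = 1) (h4 : infCount p4 = 1)
    (n12 : p1 ≠ p2) (n13 : p1 ≠ p3) (n14 : p1 ≠ p4)
    (n23 : p2 ≠ p3) (n24 : p2 ≠ p4) (n34 : p3 ≠ p4) :
    (cellsOf ({p1, p2, p3, p4} : Set (Triple L))).Finite ∧
      (cellsOf ({p1, p2, p3, p4} : Set (Triple L))).ncard = 4 := by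
  have hset : cellsOf ({p1, p2, p3, p4} : Set (Triple L)) =
      ({⟨p1, h1⟩, ⟨p2, h2⟩, ⟨p3, h3⟩, ⟨p4, h4⟩} : Set (Cell L)) := by
    ext d
    simp only [cellsOf, Set.mem_setOf_eq, Set.mem_insert_iff, Set.mem_singleton_iff]
    constructor
    · rintro (h | h | h | h)
      · exact Or.inl (Subtype.ext h)
      · exact Or.inr (Or.inl (Subtype.ext h))
      · exact Or.inr (Or.inr (Or.inl (Subtype.ext h)))
      · exact Or.inr (Or.inr (Or.inr (Subtype.ext h)))
    · rintro (rfl | rfl | rfl | rfl)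
      · exact Or.inl rfl
      · exact Or.inr (Or.inl rfl)
      · exact Or.inr (Or.inr (Or.inl rfl))
      · exact Or.inr (Or.inr (Or.inr rfl))
  rw [hset]
  refine ⟨by
    exact (((Set.finite_singleton _).insert _).insert _).insert _, ?_⟩
  exact ncard_four (fun h => n12 (congrArg Subtype.val h)) (fun h => n13 (congrArg Subtype.val h))
    (fun h => n14 (congrArg Subtype.val h)) (fun h => n23 (congrArg Subtype.val h))
    (fun h => n24 (congrArg Subtype.val h)) (fun h => n34 (congrArg Subtype.val h))

open Classical in
lemma fSolved_val {d : Cell L} {a b c : ExtCoord L} (hd : d.1 = (a, b, c)) :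
    fSolved L d = (if a = posInf then some Color.red else if a = negInf then some Color.orange
      else if b = posInf then some Color.blue else if b = negInf then some Color.green
      else if c = posInf then some Color.white else some Color.yellow) := by
  obtain ⟨p, hp⟩ := d
  cases hd
  rfl

lemma cellsOf_union (A B : Set (Triple L)) : cellsOf (A ∪ B) = cellsOf A ∪ cellsOf B := rfl

set_option maxHeartbeats 2000000 in
lemma static_main {u v : ExtCoord L} (hu : u.isInfB = false) (hv : v.isInfB = false)
    (h0 : ¬(u = zero ∧ v = zero)) (c : Cell L) (hc : c.1 = (u, v, posInf))
    (hclass : ∀ d : Cell L, Phi d.1 = Phi c.1 → d.1 ∈ Sfull u v) :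
    (cluster c).Finite ∧ 24 ≤ (cluster c).ncard ∧
      ∀ γ : Color, {d ∈ cluster c | fSolved L d = some γ}.ncard = 4 := by
  have hur : u.reflect.isInfB = false := by rw [isInfB_reflect]; exact hu
  have hvr : v.reflect.isInfB = false := by rw [isInfB_reflect]; exact hv
  obtain ⟨hu1, hu2⟩ := ne_inf hu
  obtain ⟨hv1, hv2⟩ := ne_inf hv
  obtain ⟨hur1, hur2⟩ := ne_inf hur
  obtain ⟨hvr1, hvr2⟩ := ne_inf hvr
  have h0' : ¬(u = zero ∧ v.reflect = zero) := by
    rw [reflect_eq_zero]; exact h0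
  have hsup := Sfull_sub_cluster hc
  have heq : cluster c = cellsOf (Sfull u v) := by
    apply Set.eq_of_subset_of_subset
    · intro d hd; exact hclass d (Phi_of_mem_cluster hd)
    · intro d hd; exact hsup d.1 hd d rfl
  obtain ⟨q12, q13, q14, q23, q24, q34⟩ := pair_ne u v h0
  have PN' := pair_ne u v.reflect h0'
  simp only [reflect_reflect] at PN'
  obtain ⟨r12, r13, r14, r23, r24, r34⟩ := PN'
  -- cardinalities of the six faces
  have nzp := ncard_cellsOf_four (L := L)
    (infc_ffi (w := posInf) hu hv rfl) (infc_ffi (w := posInf) hvr hu rfl)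
    (infc_ffi (w := posInf) hur hvr rfl) (infc_ffi (w := posInf) hv hur rfl)
    (liftA q12 posInf) (liftA q13 posInf) (liftA q14 posInf)
    (liftA q23 posInf) (liftA q24 posInf) (liftA q34 posInf)
  have nym := ncard_cellsOf_four (L := L)
    (infc_fif (w := negInf) hu hv rfl) (infc_fif (w := negInf) hv hur rfl)
    (infc_fif (w := negInf) hur hvr rfl) (infc_fif (w := negInf) hvr hu rfl)
    (liftB q14 negInf) (liftB q13 negInf) (liftB q12 negInf)
    (liftB q34.symm negInf) (liftB q24.symm negInf) (liftB q23.symm negInf)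
  have nzm := ncard_cellsOf_four (L := L)
    (infc_ffi (w := negInf) hu hvr rfl) (infc_ffi (w := negInf) hv hu rfl)
    (infc_ffi (w := negInf) hur hv rfl) (infc_ffi (w := negInf) hvr hur rfl)
    (liftA r12 negInf) (liftA r13 negInf) (liftA r14 negInf)
    (liftA r23 negInf) (liftA r24 negInf) (liftA r34 negInf)
  have nyp := ncard_cellsOf_four (L := L)
    (infc_fif (w := posInf) hu hvr rfl) (infc_fif (w := posInf) hvr hur rfl)
    (infc_fif (w := posInf) hur hv rfl) (infc_fif (w := posInf) hv hu rfl)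
    (liftB r14 posInf) (liftB r13 posInf) (liftB r12 posInf)
    (liftB r34.symm posInf) (liftB r24.symm posInf) (liftB r23.symm posInf)
  have nxp := ncard_cellsOf_four (L := L)
    (infc_iff (w := posInf) hv hur rfl) (infc_iff (w := posInf) hu hv rfl)
    (infc_iff (w := posInf) hvr hu rfl) (infc_iff (w := posInf) hur hvr rfl)
    (liftC q14.symm posInf) (liftC q24.symm posInf) (liftC q34.symm posInf)
    (liftC q12 posInf) (liftC q13 posInf) (liftC q23 posInf)
  have nxm := ncard_cellsOf_four (L := L)
    (infc_iff (w := negInf) hv hu rfl) (infc_iff (w := negInf) hur hv rfl)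
    (infc_iff (w := negInf) hvr hur rfl) (infc_iff (w := negInf) hu hvr rfl)
    (liftC r23 negInf) (liftC r24 negInf) (liftC r12.symm negInf)
    (liftC r34 negInf) (liftC r13.symm negInf) (liftC r14.symm negInf)
  have hcount : ∀ γ : Color, (cellsOf (Fc u v γ)).Finite ∧ (cellsOf (Fc u v γ)).ncard = 4 := by
    intro γ
    cases γ
    · exact nxp
    · exact nzp
    · exact nym
    · exact nxm
    · exact nzm
    · exact nyp
  -- fSolved sends each face set to its color
  have hfc : ∀ d : Cell L, d.1 ∈ Sfull u v → ∀ γ : Color,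
      (fSolved L d = some γ ↔ d.1 ∈ Fc u v γ) := by
    intro d hd γ
    simp only [Sfull, Set.mem_union] at hd
    rcases hd with ((((hd | hd) | hd) | hd) | hd) | hd <;>
      simp only [Fzp, Fym, Fzm, Fyp, Fxp, Fxm, Set.mem_insert_iff,
        Set.mem_singleton_iff] at hd <;>
      rcases hd with hd | hd | hd | hd <;>
      rw [fSolved_val hd] <;>
      cases γ <;>
      simp [Fc, Fzp, Fym, Fzm, Fyp, Fxp, Fxm, hd, hu1, hu2, hv1, hv2, hur1, hur2,
        hvr1, hvr2, Prod.ext_iff]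
  have hsets : ∀ γ : Color, {d ∈ cluster c | fSolved L d = some γ} = cellsOf (Fc u v γ) := by
    intro γ
    ext d
    simp only [Set.mem_setOf_eq, heq]
    constructor
    · rintro ⟨hd, hf⟩; exact (hfc d hd γ).mp hf
    · intro hd
      have hds : d.1 ∈ Sfull u v := by
        cases γ <;> simp only [Fc] at hd <;> simp [Sfull, cellsOf, Set.mem_union] at hd ⊢ <;> tauto
      exact ⟨hds, (hfc d hds γ).mpr hd⟩
  have hγ4 : ∀ γ : Color, {d ∈ cluster c | fSolved L d = some γ}.ncard = 4 := by
    intro γ; rw [hsets γ]; exact (hcount γ).2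
  -- finiteness of the cluster
  have hfin : (cluster c).Finite := by
    rw [heq]
    have : cellsOf (Sfull u v) = cellsOf (Fzp u v) ∪ cellsOf (Fym u v) ∪ cellsOf (Fzm u v)
        ∪ cellsOf (Fyp u v) ∪ cellsOf (Fxp u v) ∪ cellsOf (Fxm u v) := rfl
    rw [this]
    exact ((((((hcount .white).1.union (hcount .green).1).union (hcount .yellow).1).union
      (hcount .blue).1).union (hcount .red).1).union (hcount .orange).1)
  refine ⟨hfin, ?_, hγ4⟩
  -- lower bound 24 on the cluster cardinality
  have hdisj : ∀ γ1 γ2 : Color, γ1 ≠ γ2 →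
      Disjoint {d ∈ cluster c | fSolved L d = some γ1} {d ∈ cluster c | fSolved L d = some γ2} := by
    intro γ1 γ2 hne
    rw [Set.disjoint_left]
    rintro d ⟨-, h1⟩ ⟨-, h2⟩
    rw [h1] at h2
    exact hne (Option.some_injective _ h2)
  have hdfin : ∀ γ : Color, {d ∈ cluster c | fSolved L d = some γ}.Finite :=
    fun γ => hfin.subset (fun d hd => hd.1)
  have u1 : ({d ∈ cluster c | fSolved L d = some Color.yellow}
      ∪ {d ∈ cluster c | fSolved L d = some Color.blue}).ncard = 8 := by
    rw [Set.ncard_union_eq (hdisj _ _ (by decide)) (hdfin _) (hdfin _), hγ4, hγ4]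
  have u2 : ({d ∈ cluster c | fSolved L d = some Color.orange}
      ∪ ({d ∈ cluster c | fSolved L d = some Color.yellow}
      ∪ {d ∈ cluster c | fSolved L d = some Color.blue})).ncard = 12 := by
    rw [Set.ncard_union_eq (by
        simp only [Set.disjoint_union_right]
        exact ⟨hdisj _ _ (by decide), hdisj _ _ (by decide)⟩)
      (hdfin _) ((hdfin _).union (hdfin _)), hγ4, u1]
  have u3 : ({d ∈ cluster c | fSolved L d = some Color.green}
      ∪ ({d ∈ cluster c | fSolved L d = some Color.orange}
      ∪ ({d ∈ cluster c | fSolved L d = some Color.yellow}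
      ∪ {d ∈ cluster c | fSolved L d = some Color.blue}))).ncard = 16 := by
    rw [Set.ncard_union_eq (by
        simp only [Set.disjoint_union_right]
        exact ⟨hdisj _ _ (by decide), hdisj _ _ (by decide), hdisj _ _ (by decide)⟩)
      (hdfin _) ((hdfin _).union ((hdfin _).union (hdfin _))), hγ4, u2]
  have u4 : ({d ∈ cluster c | fSolved L d = some Color.white}
      ∪ ({d ∈ cluster c | fSolved L d = some Color.green}
      ∪ ({d ∈ cluster c | fSolved L d = some Color.orange}
      ∪ ({d ∈ cluster c | fSolved L d = some Color.yellow}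
      ∪ {d ∈ cluster c | fSolved L d = some Color.blue})))).ncard = 20 := by
    rw [Set.ncard_union_eq (by
        simp only [Set.disjoint_union_right]
        exact ⟨hdisj _ _ (by decide), hdisj _ _ (by decide), hdisj _ _ (by decide),
          hdisj _ _ (by decide)⟩)
      (hdfin _) ((hdfin _).union ((hdfin _).union ((hdfin _).union (hdfin _)))), hγ4, u3]
  have u5 : ({d ∈ cluster c | fSolved L d = some Color.red}
      ∪ ({d ∈ cluster c | fSolved L d = some Color.white}
      ∪ ({d ∈ cluster c | fSolved L d = some Color.green}
      ∪ ({d ∈ cluster c | fSolved L d = some Color.orange}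
      ∪ ({d ∈ cluster c | fSolved L d = some Color.yellow}
      ∪ {d ∈ cluster c | fSolved L d = some Color.blue}))))).ncard = 24 := by
    rw [Set.ncard_union_eq (by
        simp only [Set.disjoint_union_right]
        exact ⟨hdisj _ _ (by decide), hdisj _ _ (by decide), hdisj _ _ (by decide),
          hdisj _ _ (by decide), hdisj _ _ (by decide)⟩)
      (hdfin _) ((hdfin _).union ((hdfin _).union ((hdfin _).union
        ((hdfin _).union (hdfin _))))), hγ4, u4]
  have hU : ({d ∈ cluster c | fSolved L d = some Color.red}
      ∪ ({d ∈ cluster c | fSolved L d = some Color.white}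
      ∪ ({d ∈ cluster c | fSolved L d = some Color.green}
      ∪ ({d ∈ cluster c | fSolved L d = some Color.orange}
      ∪ ({d ∈ cluster c | fSolved L d = some Color.yellow}
      ∪ {d ∈ cluster c | fSolved L d = some Color.blue}))))) ⊆ cluster c := by
    intro d hd
    rcases hd with h | h | h | h | h | h <;> exact h.1
  calc (24 : ℕ) = _ := u5.symm
    _ ≤ (cluster c).ncard := Set.ncard_le_ncard hU hfin

end Counting

section Classify

lemma isInfB_true_iff {a : ExtCoord L} : a.isInfB = true ↔ a = posInf ∨ a = negInf := by
  cases a <;> simp [isInfB]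

lemma fin_cases {a : ExtCoord L} (ha : a.isInfB = false) :
    (∃ r, a = pos r) ∨ a = zero ∨ (∃ r, a = neg r) := by
  cases a <;> simp_all [isInfB]

lemma f1_fin {a : ExtCoord L} (ha : a.isInfB = false) : f1 a = 0 := by
  cases a <;> simp_all [isInfB, f1]

lemma cell_split (p : Triple L) (h : infCount p = 1) :
    ∃ a b : ExtCoord L, a.isInfB = false ∧ b.isInfB = false ∧
      (p = (posInf, a, b) ∨ p = (negInf, a, b) ∨ p = (a, posInf, b) ∨ p = (a, negInf, b) ∨
        p = (a, b, posInf) ∨ p = (a, b, negInf)) := by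
  obtain ⟨x, y, z⟩ := p
  rcases hbx : x.isInfB <;> rcases hby : y.isInfB <;> rcases hbz : z.isInfB <;>
    simp [infCount, hbx, hby, hbz] at h
  · exact ⟨x, y, hbx, hby, by
      rcases isInfB_true_iff.mp hbz with rfl | rfl
      · exact Or.inr (Or.inr (Or.inr (Or.inr (Or.inl rfl))))
      · exact Or.inr (Or.inr (Or.inr (Or.inr (Or.inr rfl))))⟩
  · exact ⟨x, z, hbx, hbz, by
      rcases isInfB_true_iff.mp hby with rfl | rfl
      · exact Or.inr (Or.inr (Or.inl rfl))
      · exact Or.inr (Or.inr (Or.inr (Or.inl rfl)))⟩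
  · exact ⟨y, z, hby, hbz, by
      rcases isInfB_true_iff.mp hbx with rfl | rfl
      · exact Or.inl rfl
      · exact Or.inr (Or.inl rfl)⟩

lemma detM_pos3 {a b : ExtCoord L} (ha : a.isInfB = false) (hb : b.isInfB = false)
    (w : ExtCoord L) (s t : L) : detM (a, b, w) s t = f1 w * d2 s t a b := by
  simp [detM, f1_fin ha, f1_fin hb]

lemma detM_pos2 {a b : ExtCoord L} (ha : a.isInfB = false) (hb : b.isInfB = false)
    (w : ExtCoord L) (s t : L) : detM (a, w, b) s t = -(f1 w * d2 s t a b) := by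
  simp [detM, f1_fin ha, f1_fin hb]

lemma detM_pos1 {a b : ExtCoord L} (ha : a.isInfB = false) (hb : b.isInfB = false)
    (w : ExtCoord L) (s t : L) : detM (w, a, b) s t = f1 w * d2 s t a b := by
  simp [detM, f1_fin ha, f1_fin hb]

/-- Pair-level zero count. -/
noncomputable def zc2 (a b : ExtCoord L) : ℕ :=
  (if a.isZeroB then 1 else 0) + (if b.isZeroB then 1 else 0)

/-- Pair-level count of `±s`. -/
noncomputable def ca2 (s : L) (a b : ExtCoord L) : ℕ := aInd s a + aInd s b

lemma classify1 {s : L} {a b : ExtCoord L}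
    (hz : zc2 a b = 1)
    (hs : ca2 s a b = 1) :
    (a = pos s ∧ b = zero) ∨ (a = zero ∧ b = pos s) ∨
      (a = neg s ∧ b = zero) ∨ (a = zero ∧ b = neg s) := by
  cases a <;> cases b <;> simp_all [zc2, ca2, aInd, isZeroB]

lemma classify3 {s : L} {a b : ExtCoord L}
    (hz : zc2 a b = 0)
    (hs : ca2 s a b = 2) :
    (a = pos s ∧ b = pos s) ∨ (a = neg s ∧ b = pos s) ∨
      (a = neg s ∧ b = neg s) ∨ (a = pos s ∧ b = neg s) := by
  cases a <;> cases b <;> simp_all [zc2, ca2, aInd, isZeroB] <;> split_ifs at hs <;> simp_all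

lemma classify2 {s t : L} (hst : s ≠ t) {a b : ExtCoord L}
    (hz : zc2 a b = 0)
    (hs : ca2 s a b = 1) (ht : ca2 t a b = 1)
    (hdet : d2 s t a b = 1) :
    (a = pos s ∧ b = pos t) ∨ (a = neg t ∧ b = pos s) ∨
      (a = neg s ∧ b = neg t) ∨ (a = pos t ∧ b = neg s) := by
  cases a <;> cases b <;>
    simp_all [zc2, ca2, aInd, isZeroB, d2, f2] <;>
    split_ifs at hs ht hdet <;> simp_all

end Classify

section TripleClassify

lemma zeroCount_split3 {a b w : ExtCoord L} (hw : w.isInfB = true) :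
    zeroCount (a, b, w) = zc2 a b := by
  rcases isInfB_true_iff.mp hw with rfl | rfl <;> simp [zeroCount, zc2, isZeroB]

lemma zeroCount_split2 {a b w : ExtCoord L} (hw : w.isInfB = true) :
    zeroCount (a, w, b) = zc2 a b := by
  rcases isInfB_true_iff.mp hw with rfl | rfl <;> simp [zeroCount, zc2, isZeroB] <;> omega

lemma zeroCount_split1 {a b w : ExtCoord L} (hw : w.isInfB = true) :
    zeroCount (w, a, b) = zc2 a b := by
  rcases isInfB_true_iff.mp hw with rfl | rfl <;> simp [zeroCount, zc2, isZeroB] <;> omega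

lemma cntAbs_split3 {a b w : ExtCoord L} (s : L) (hw : w.isInfB = true) :
    cntAbs (a, b, w) s = ca2 s a b := by
  rcases isInfB_true_iff.mp hw with rfl | rfl <;> simp [cntAbs, ca2, aInd]

lemma cntAbs_split2 {a b w : ExtCoord L} (s : L) (hw : w.isInfB = true) :
    cntAbs (a, w, b) s = ca2 s a b := by
  rcases isInfB_true_iff.mp hw with rfl | rfl <;> simp [cntAbs, ca2, aInd] <;> omega

lemma cntAbs_split1 {a b w : ExtCoord L} (s : L) (hw : w.isInfB = true) :
    cntAbs (w, a, b) s = ca2 s a b := by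
  rcases isInfB_true_iff.mp hw with rfl | rfl <;> simp [cntAbs, ca2, aInd] <;> omega

lemma Phi_parts {c d : Cell L} (hPhi : Phi d.1 = Phi c.1) :
    zeroCount d.1 = zeroCount c.1 ∧ (∀ r : L, cntAbs d.1 r = cntAbs c.1 r) ∧
      ∀ s t : L, detM d.1 s t = detM c.1 s t := by
  refine ⟨congrArg Prod.fst hPhi, ?_, ?_⟩
  · intro r
    have h := congrArg (fun q => q.2.1 r) hPhi
    simpa [Phi] using h
  · intro s t
    have h := congrArg (fun q => q.2.2 s t) hPhi
    simpa [Phi] using h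

set_option maxHeartbeats 2000000 in
lemma classifyT1 {s : L} (c : Cell L) (hc : c.1 = (pos s, zero, posInf)) (d : Cell L)
    (hPhi : Phi d.1 = Phi c.1) : d.1 ∈ Sfull (pos s) (zero : ExtCoord L) := by
  obtain ⟨hz0, hcab, -⟩ := Phi_parts hPhi
  have hz : zeroCount d.1 = 1 := by rw [hz0, hc]; simp [zeroCount, isZeroB]
  have hs : cntAbs d.1 s = 1 := by rw [hcab s, hc]; simp [cntAbs, aInd]
  obtain ⟨a, b, ha, hb, hcase⟩ := cell_split d.1 d.2
  rcases hcase with h6 | h6 | h6 | h6 | h6 | h6 <;> rw [h6] at hz hs ⊢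
  · simp only [zeroCount_split1, zeroCount_split2, zeroCount_split3, cntAbs_split1,
      cntAbs_split2, cntAbs_split3, isInfB_true_iff, true_or, or_true] at hz hs
    rcases classify1 hz hs with ⟨rfl, rfl⟩ | ⟨rfl, rfl⟩ | ⟨rfl, rfl⟩ | ⟨rfl, rfl⟩ <;>
      simp [Sfull, Fzp, Fym, Fzm, Fyp, Fxp, Fxm, reflect]
  · simp only [zeroCount_split1, zeroCount_split2, zeroCount_split3, cntAbs_split1,
      cntAbs_split2, cntAbs_split3, isInfB_true_iff, true_or, or_true] at hz hs
    rcases classify1 hz hs with ⟨rfl, rfl⟩ | ⟨rfl, rfl⟩ | ⟨rfl, rfl⟩ | ⟨rfl, rfl⟩ <;>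
      simp [Sfull, Fzp, Fym, Fzm, Fyp, Fxp, Fxm, reflect]
  · simp only [zeroCount_split1, zeroCount_split2, zeroCount_split3, cntAbs_split1,
      cntAbs_split2, cntAbs_split3, isInfB_true_iff, true_or, or_true] at hz hs
    rcases classify1 hz hs with ⟨rfl, rfl⟩ | ⟨rfl, rfl⟩ | ⟨rfl, rfl⟩ | ⟨rfl, rfl⟩ <;>
      simp [Sfull, Fzp, Fym, Fzm, Fyp, Fxp, Fxm, reflect]
  · simp only [zeroCount_split1, zeroCount_split2, zeroCount_split3, cntAbs_split1,
      cntAbs_split2, cntAbs_split3, isInfB_true_iff, true_or, or_true] at hz hs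
    rcases classify1 hz hs with ⟨rfl, rfl⟩ | ⟨rfl, rfl⟩ | ⟨rfl, rfl⟩ | ⟨rfl, rfl⟩ <;>
      simp [Sfull, Fzp, Fym, Fzm, Fyp, Fxp, Fxm, reflect]
  · simp only [zeroCount_split1, zeroCount_split2, zeroCount_split3, cntAbs_split1,
      cntAbs_split2, cntAbs_split3, isInfB_true_iff, true_or, or_true] at hz hs
    rcases classify1 hz hs with ⟨rfl, rfl⟩ | ⟨rfl, rfl⟩ | ⟨rfl, rfl⟩ | ⟨rfl, rfl⟩ <;>
      simp [Sfull, Fzp, Fym, Fzm, Fyp, Fxp, Fxm, reflect]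
  · simp only [zeroCount_split1, zeroCount_split2, zeroCount_split3, cntAbs_split1,
      cntAbs_split2, cntAbs_split3, isInfB_true_iff, true_or, or_true] at hz hs
    rcases classify1 hz hs with ⟨rfl, rfl⟩ | ⟨rfl, rfl⟩ | ⟨rfl, rfl⟩ | ⟨rfl, rfl⟩ <;>
      simp [Sfull, Fzp, Fym, Fzm, Fyp, Fxp, Fxm, reflect]

set_option maxHeartbeats 2000000 in
lemma classifyT3 {s : L} (c : Cell L) (hc : c.1 = (pos s, pos s, posInf)) (d : Cell L)
    (hPhi : Phi d.1 = Phi c.1) : d.1 ∈ Sfull (pos s) (pos s : ExtCoord L) := by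
  obtain ⟨hz0, hcab, -⟩ := Phi_parts hPhi
  have hz : zeroCount d.1 = 0 := by rw [hz0, hc]; simp [zeroCount, isZeroB]
  have hs : cntAbs d.1 s = 2 := by rw [hcab s, hc]; simp [cntAbs, aInd]
  obtain ⟨a, b, ha, hb, hcase⟩ := cell_split d.1 d.2
  rcases hcase with h6 | h6 | h6 | h6 | h6 | h6 <;> rw [h6] at hz hs ⊢
  · simp only [zeroCount_split1, zeroCount_split2, zeroCount_split3, cntAbs_split1,
      cntAbs_split2, cntAbs_split3, isInfB_true_iff, true_or, or_true] at hz hs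
    rcases classify3 hz hs with ⟨rfl, rfl⟩ | ⟨rfl, rfl⟩ | ⟨rfl, rfl⟩ | ⟨rfl, rfl⟩ <;>
      simp [Sfull, Fzp, Fym, Fzm, Fyp, Fxp, Fxm, reflect]
  · simp only [zeroCount_split1, zeroCount_split2, zeroCount_split3, cntAbs_split1,
      cntAbs_split2, cntAbs_split3, isInfB_true_iff, true_or, or_true] at hz hs
    rcases classify3 hz hs with ⟨rfl, rfl⟩ | ⟨rfl, rfl⟩ | ⟨rfl, rfl⟩ | ⟨rfl, rfl⟩ <;>
      simp [Sfull, Fzp, Fym, Fzm, Fyp, Fxp, Fxm, reflect]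
  · simp only [zeroCount_split1, zeroCount_split2, zeroCount_split3, cntAbs_split1,
      cntAbs_split2, cntAbs_split3, isInfB_true_iff, true_or, or_true] at hz hs
    rcases classify3 hz hs with ⟨rfl, rfl⟩ | ⟨rfl, rfl⟩ | ⟨rfl, rfl⟩ | ⟨rfl, rfl⟩ <;>
      simp [Sfull, Fzp, Fym, Fzm, Fyp, Fxp, Fxm, reflect]
  · simp only [zeroCount_split1, zeroCount_split2, zeroCount_split3, cntAbs_split1,
      cntAbs_split2, cntAbs_split3, isInfB_true_iff, true_or, or_true] at hz hs
    rcases classify3 hz hs with ⟨rfl, rfl⟩ | ⟨rfl, rfl⟩ | ⟨rfl, rfl⟩ | ⟨rfl, rfl⟩ <;>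
      simp [Sfull, Fzp, Fym, Fzm, Fyp, Fxp, Fxm, reflect]
  · simp only [zeroCount_split1, zeroCount_split2, zeroCount_split3, cntAbs_split1,
      cntAbs_split2, cntAbs_split3, isInfB_true_iff, true_or, or_true] at hz hs
    rcases classify3 hz hs with ⟨rfl, rfl⟩ | ⟨rfl, rfl⟩ | ⟨rfl, rfl⟩ | ⟨rfl, rfl⟩ <;>
      simp [Sfull, Fzp, Fym, Fzm, Fyp, Fxp, Fxm, reflect]
  · simp only [zeroCount_split1, zeroCount_split2, zeroCount_split3, cntAbs_split1,
      cntAbs_split2, cntAbs_split3, isInfB_true_iff, true_or, or_true] at hz hs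
    rcases classify3 hz hs with ⟨rfl, rfl⟩ | ⟨rfl, rfl⟩ | ⟨rfl, rfl⟩ | ⟨rfl, rfl⟩ <;>
      simp [Sfull, Fzp, Fym, Fzm, Fyp, Fxp, Fxm, reflect]

set_option maxHeartbeats 4000000 in
lemma classifyT2 {s t : L} (hst : s ≠ t) (c : Cell L) (hc : c.1 = (pos s, pos t, posInf))
    (d : Cell L) (hPhi : Phi d.1 = Phi c.1) : d.1 ∈ Sfull (pos s) (pos t : ExtCoord L) := by
  obtain ⟨hz0, hcab, hdet0⟩ := Phi_parts hPhi
  have hz : zeroCount d.1 = 0 := by rw [hz0, hc]; simp [zeroCount, isZeroB]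
  have hs : cntAbs d.1 s = 1 := by rw [hcab s, hc]; simp [cntAbs, aInd, Ne.symm hst]
  have ht : cntAbs d.1 t = 1 := by rw [hcab t, hc]; simp [cntAbs, aInd, hst]
  have hdet : detM d.1 s t = 1 := by rw [hdet0 s t, hc]; simp [detM, d2, f1, f2, hst]
  obtain ⟨a, b, ha, hb, hcase⟩ := cell_split d.1 d.2
  rcases hcase with h6 | h6 | h6 | h6 | h6 | h6 <;> rw [h6] at hz hs ht hdet ⊢
  · -- (posInf, a, b) : pair (a,b), det = +d2
    simp only [zeroCount_split1, zeroCount_split2, zeroCount_split3, cntAbs_split1,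
      cntAbs_split2, cntAbs_split3, isInfB_true_iff, true_or, or_true] at hz hs ht
    rw [detM_pos1 ha hb] at hdet
    simp only [f1, one_mul] at hdet
    rcases classify2 hst hz hs ht hdet with ⟨rfl, rfl⟩ | ⟨rfl, rfl⟩ | ⟨rfl, rfl⟩ | ⟨rfl, rfl⟩ <;>
      simp [Sfull, Fzp, Fym, Fzm, Fyp, Fxp, Fxm, reflect]
  · -- (negInf, a, b) : det = -d2, use (a, b.reflect)
    simp only [zeroCount_split1, zeroCount_split2, zeroCount_split3, cntAbs_split1,
      cntAbs_split2, cntAbs_split3, isInfB_true_iff, true_or, or_true] at hz hs ht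
    rw [detM_pos1 ha hb] at hdet
    simp only [f1, neg_mul, one_mul] at hdet
    have hz' : zc2 a b.reflect = 0 := by simpa [zc2, isZeroB_reflect] using hz
    have hs' : ca2 s a b.reflect = 1 := by simpa [ca2, aInd_reflect] using hs
    have ht' : ca2 t a b.reflect = 1 := by simpa [ca2, aInd_reflect] using ht
    have hdet' : d2 s t a b.reflect = 1 := by rw [d2_reflect_right]; omega
    rcases classify2 hst hz' hs' ht' hdet' with ⟨rfl, hbr⟩ | ⟨rfl, hbr⟩ | ⟨rfl, hbr⟩ | ⟨rfl, hbr⟩ <;>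
    · have h7 := congrArg reflect hbr
      rw [reflect_reflect] at h7
      subst h7
      simp [Sfull, Fzp, Fym, Fzm, Fyp, Fxp, Fxm, reflect]
  · -- (a, posInf, b) : det = -d2, use (a, b.reflect)
    simp only [zeroCount_split1, zeroCount_split2, zeroCount_split3, cntAbs_split1,
      cntAbs_split2, cntAbs_split3, isInfB_true_iff, true_or, or_true] at hz hs ht
    rw [detM_pos2 ha hb] at hdet
    simp only [f1, one_mul] at hdet
    have hz' : zc2 a b.reflect = 0 := by simpa [zc2, isZeroB_reflect] using hz
    have hs' : ca2 s a b.reflect = 1 := by simpa [ca2, aInd_reflect] using hs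
    have ht' : ca2 t a b.reflect = 1 := by simpa [ca2, aInd_reflect] using ht
    have hdet' : d2 s t a b.reflect = 1 := by rw [d2_reflect_right]; omega
    rcases classify2 hst hz' hs' ht' hdet' with ⟨rfl, hbr⟩ | ⟨rfl, hbr⟩ | ⟨rfl, hbr⟩ | ⟨rfl, hbr⟩ <;>
    · have h7 := congrArg reflect hbr
      rw [reflect_reflect] at h7
      subst h7
      simp [Sfull, Fzp, Fym, Fzm, Fyp, Fxp, Fxm, reflect]
  · -- (a, negInf, b) : det = +d2
    simp only [zeroCount_split1, zeroCount_split2, zeroCount_split3, cntAbs_split1,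
      cntAbs_split2, cntAbs_split3, isInfB_true_iff, true_or, or_true] at hz hs ht
    rw [detM_pos2 ha hb] at hdet
    simp only [f1, neg_mul, one_mul, neg_neg] at hdet
    rcases classify2 hst hz hs ht hdet with ⟨rfl, rfl⟩ | ⟨rfl, rfl⟩ | ⟨rfl, rfl⟩ | ⟨rfl, rfl⟩ <;>
      simp [Sfull, Fzp, Fym, Fzm, Fyp, Fxp, Fxm, reflect]
  · -- (a, b, posInf) : det = +d2
    simp only [zeroCount_split1, zeroCount_split2, zeroCount_split3, cntAbs_split1,
      cntAbs_split2, cntAbs_split3, isInfB_true_iff, true_or, or_true] at hz hs ht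
    rw [detM_pos3 ha hb] at hdet
    simp only [f1, one_mul] at hdet
    rcases classify2 hst hz hs ht hdet with ⟨rfl, rfl⟩ | ⟨rfl, rfl⟩ | ⟨rfl, rfl⟩ | ⟨rfl, rfl⟩ <;>
      simp [Sfull, Fzp, Fym, Fzm, Fyp, Fxp, Fxm, reflect]
  · -- (a, b, negInf) : det = -d2, use (a, b.reflect)
    simp only [zeroCount_split1, zeroCount_split2, zeroCount_split3, cntAbs_split1,
      cntAbs_split2, cntAbs_split3, isInfB_true_iff, true_or, or_true] at hz hs ht
    rw [detM_pos3 ha hb] at hdet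
    simp only [f1, neg_mul, one_mul] at hdet
    have hz' : zc2 a b.reflect = 0 := by simpa [zc2, isZeroB_reflect] using hz
    have hs' : ca2 s a b.reflect = 1 := by simpa [ca2, aInd_reflect] using hs
    have ht' : ca2 t a b.reflect = 1 := by simpa [ca2, aInd_reflect] using ht
    have hdet' : d2 s t a b.reflect = 1 := by rw [d2_reflect_right]; omega
    rcases classify2 hst hz' hs' ht' hdet' with ⟨rfl, hbr⟩ | ⟨rfl, hbr⟩ | ⟨rfl, hbr⟩ | ⟨rfl, hbr⟩ <;>
    · have h7 := congrArg reflect hbr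
      rw [reflect_reflect] at h7
      subst h7
      simp [Sfull, Fzp, Fym, Fzm, Fyp, Fxp, Fxm, reflect]

end TripleClassify

section Canonical

lemma canonical (c : Cell L) (hcen : ¬IsCenter c) :
    ∃ c' : Cell L, c' ∈ cluster c ∧
      ((∃ s : L, c'.1 = (pos s, zero, posInf)) ∨ (∃ s t : L, c'.1 = (pos s, pos t, posInf))) := by
  have key : ∀ x y : ExtCoord L, x.isInfB = false → y.isInfB = false →
      M c (x, y, posInf) → ∃ c' : Cell L, c' ∈ cluster c ∧
      ((∃ s : L, c'.1 = (pos s, zero, posInf)) ∨ (∃ s t : L, c'.1 = (pos s, pos t, posInf))) := by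
    intro x y hx hy hm
    have hnc : ¬(x = zero ∧ y = zero) := by
      rintro ⟨rfl, rfl⟩
      have he : (⟨(zero, zero, posInf), by simp [infCount, isInfB]⟩ : Cell L) ∈ cluster c :=
        hm _ rfl
      have hp := Phi_of_mem_cluster he
      have hzz := congrArg Prod.fst hp
      simp only [Phi] at hzz
      apply hcen
      unfold IsCenter
      rw [← hzz]
      simp [zeroCount, isZeroB]
    rcases fin_cases hx with ⟨s, rfl⟩ | rfl | ⟨s, rfl⟩ <;>
      rcases fin_cases hy with ⟨t, rfl⟩ | rfl | ⟨t, rfl⟩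
    · -- (pos s, pos t)
      exact ⟨⟨(pos s, pos t, posInf), by simp [infCount, isInfB]⟩, hm _ rfl, Or.inr ⟨s, t, rfl⟩⟩
    · -- (pos s, zero)
      exact ⟨⟨(pos s, zero, posInf), by simp [infCount, isInfB]⟩, hm _ rfl, Or.inl ⟨s, rfl⟩⟩
    · -- (pos s, neg t) → ρz → (pos t, pos s)
      have h1 : M c (pos t, pos s, posInf) := by
        simpa only [rot, reflect_pos, reflect_neg, reflect_zero, reflect_posInf, reflect_negInf,
        reflect_reflect] using M_rot hm Axis.z
      exact ⟨⟨(pos t, pos s, posInf), by simp [infCount, isInfB]⟩, h1 _ rfl, Or.inr ⟨t, s, rfl⟩⟩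
    · -- (zero, pos t) → ρz³ → (pos t, zero)
      have h1 : M c (neg t, zero, posInf) := by
        simpa only [rot, reflect_pos, reflect_neg, reflect_zero, reflect_posInf, reflect_negInf,
        reflect_reflect] using M_rot hm Axis.z
      have h2 : M c (zero, neg t, posInf) := by
        simpa only [rot, reflect_pos, reflect_neg, reflect_zero, reflect_posInf, reflect_negInf,
        reflect_reflect] using M_rot h1 Axis.z
      have h3 : M c (pos t, zero, posInf) := by
        simpa only [rot, reflect_pos, reflect_neg, reflect_zero, reflect_posInf, reflect_negInf,
        reflect_reflect] using M_rot h2 Axis.z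
      exact ⟨⟨(pos t, zero, posInf), by simp [infCount, isInfB]⟩, h3 _ rfl, Or.inl ⟨t, rfl⟩⟩
    · -- (zero, zero) : excluded
      exact absurd ⟨rfl, rfl⟩ hnc
    · -- (zero, neg t) → ρz → (pos t, zero)
      have h1 : M c (pos t, zero, posInf) := by
        simpa only [rot, reflect_pos, reflect_neg, reflect_zero, reflect_posInf, reflect_negInf,
        reflect_reflect] using M_rot hm Axis.z
      exact ⟨⟨(pos t, zero, posInf), by simp [infCount, isInfB]⟩, h1 _ rfl, Or.inl ⟨t, rfl⟩⟩
    · -- (neg s, pos t) → ρz³ → (pos t, pos s)? compute: ρz (neg s, pos t) = (neg t, neg s);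
      -- ρz² = (pos s, neg t); ρz³ = (pos t, pos s)
      have h1 : M c (neg t, neg s, posInf) := by
        simpa only [rot, reflect_pos, reflect_neg, reflect_zero, reflect_posInf, reflect_negInf,
        reflect_reflect] using M_rot hm Axis.z
      have h2 : M c (pos s, neg t, posInf) := by
        simpa only [rot, reflect_pos, reflect_neg, reflect_zero, reflect_posInf, reflect_negInf,
        reflect_reflect] using M_rot h1 Axis.z
      have h3 : M c (pos t, pos s, posInf) := by
        simpa only [rot, reflect_pos, reflect_neg, reflect_zero, reflect_posInf, reflect_negInf,
        reflect_reflect] using M_rot h2 Axis.z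
      exact ⟨⟨(pos t, pos s, posInf), by simp [infCount, isInfB]⟩, h3 _ rfl, Or.inr ⟨t, s, rfl⟩⟩
    · -- (neg s, zero) → ρz² → (pos s, zero)
      have h1 : M c (zero, neg s, posInf) := by
        simpa only [rot, reflect_pos, reflect_neg, reflect_zero, reflect_posInf, reflect_negInf,
        reflect_reflect] using M_rot hm Axis.z
      have h2 : M c (pos s, zero, posInf) := by
        simpa only [rot, reflect_pos, reflect_neg, reflect_zero, reflect_posInf, reflect_negInf,
        reflect_reflect] using M_rot h1 Axis.z
      exact ⟨⟨(pos s, zero, posInf), by simp [infCount, isInfB]⟩, h2 _ rfl, Or.inl ⟨s, rfl⟩⟩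
    · -- (neg s, neg t) → ρz → (pos t, neg s) → ρz → (pos s, pos t)
      have h1 : M c (pos t, neg s, posInf) := by
        simpa only [rot, reflect_pos, reflect_neg, reflect_zero, reflect_posInf, reflect_negInf,
        reflect_reflect] using M_rot hm Axis.z
      have h2 : M c (pos s, pos t, posInf) := by
        simpa only [rot, reflect_pos, reflect_neg, reflect_zero, reflect_posInf, reflect_negInf,
        reflect_reflect] using M_rot h1 Axis.z
      exact ⟨⟨(pos s, pos t, posInf), by simp [infCount, isInfB]⟩, h2 _ rfl, Or.inr ⟨s, t, rfl⟩⟩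
  have hm0 : M c c.1 := fun e he => by rw [Subtype.ext he]; exact mem_cluster_self c
  obtain ⟨a, b, ha, hb, hcase⟩ := cell_split c.1 c.2
  have hbr : b.reflect.isInfB = false := by rw [isInfB_reflect]; exact hb
  have har : a.reflect.isInfB = false := by rw [isInfB_reflect]; exact ha
  rcases hcase with h6 | h6 | h6 | h6 | h6 | h6 <;> rw [h6] at hm0
  · -- (posInf, a, b) : ρy → (b, a, negInf) ; ρx → (b, posInf, a) ; ρx → (b, a.reflect, posInf)
    have h1 : M c (b, a, negInf) := by
      simpa only [rot, reflect_pos, reflect_neg, reflect_zero, reflect_posInf, reflect_negInf,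
        reflect_reflect] using M_rot hm0 Axis.y
    have h2 : M c (b, posInf, a) := by
      simpa only [rot, reflect_pos, reflect_neg, reflect_zero, reflect_posInf, reflect_negInf,
        reflect_reflect] using M_rot h1 Axis.x
    have h3 : M c (b, a.reflect, posInf) := by
      simpa only [rot, reflect_pos, reflect_neg, reflect_zero, reflect_posInf, reflect_negInf,
        reflect_reflect] using M_rot h2 Axis.x
    exact key b a.reflect hb har h3
  · -- (negInf, a, b) : ρy → (b, a, posInf)
    have h1 : M c (b, a, posInf) := by
      simpa only [rot, reflect_pos, reflect_neg, reflect_zero, reflect_posInf, reflect_negInf,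
        reflect_reflect] using M_rot hm0 Axis.y
    exact key b a hb ha h1
  · -- (a, posInf, b) : ρx → (a, b.reflect, posInf)
    have h1 : M c (a, b.reflect, posInf) := by
      simpa only [rot, reflect_pos, reflect_neg, reflect_zero, reflect_posInf, reflect_negInf,
        reflect_reflect] using M_rot hm0 Axis.x
    exact key a b.reflect ha hbr h1
  · -- (a, negInf, b) : ρx → (a, b.reflect, negInf) ; ρx → (a, posInf, b.reflect) ; ρx → (a, b, posInf)
    have h1 : M c (a, b.reflect, negInf) := by
      simpa only [rot, reflect_pos, reflect_neg, reflect_zero, reflect_posInf, reflect_negInf,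
        reflect_reflect] using M_rot hm0 Axis.x
    have h2 : M c (a, posInf, b.reflect) := by
      simpa only [rot, reflect_pos, reflect_neg, reflect_zero, reflect_posInf, reflect_negInf,
        reflect_reflect] using M_rot h1 Axis.x
    have h3 : M c (a, b, posInf) := by
      simpa only [rot, reflect_pos, reflect_neg, reflect_zero, reflect_posInf, reflect_negInf,
        reflect_reflect] using M_rot h2 Axis.x
    exact key a b ha hb h3
  · -- (a, b, posInf)
    exact key a b ha hb hm0
  · -- (a, b, negInf) : ρx → (a, posInf, b) ; ρx → (a, b.reflect, posInf)
    have h1 : M c (a, posInf, b) := by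
      simpa only [rot, reflect_pos, reflect_neg, reflect_zero, reflect_posInf, reflect_negInf,
        reflect_reflect] using M_rot hm0 Axis.x
    have h2 : M c (a, b.reflect, posInf) := by
      simpa only [rot, reflect_pos, reflect_neg, reflect_zero, reflect_posInf, reflect_negInf,
        reflect_reflect] using M_rot h1 Axis.x
    exact key a b.reflect ha hbr h2

end Canonical

end InfRubik
open InfRubik in
/-- In every legal configuration of the edgeless cube accessible from the solved
configuration, every non-center cluster contains exactly four cells of each color. -/
theorem four_of_each_color {L : Type u} [Infinite L] (f : Cell L → Option Color)
    (hf : Accessible (IsBasic L) (fSolved L) f)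
    (c : Cell L) (hc : ¬ IsCenter c) (γ : Color) :
    {d ∈ cluster c | f d = some γ}.ncard = 4 := by
  classical
  obtain ⟨c', hc'mem, hcanon⟩ := canonical c hc
  have hclus : cluster c' = cluster c := cluster_eq_of_mem hc'mem
  rw [← hclus]
  have hstat : (cluster c').Finite ∧ 24 ≤ (cluster c').ncard ∧
      ∀ γ : Color, {d ∈ cluster c' | fSolved L d = some γ}.ncard = 4 := by
    rcases hcanon with ⟨s, h1⟩ | ⟨s, t, h1⟩
    · exact static_main (u := ExtCoord.pos s) (v := ExtCoord.zero) rfl rfl (by simp) c' h1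
        (fun d hP => classifyT1 c' h1 d hP)
    · by_cases hst : s = t
      · subst hst
        exact static_main (u := ExtCoord.pos s) (v := ExtCoord.pos s) rfl rfl (by simp) c' h1
          (fun d hP => classifyT3 c' h1 d hP)
      · exact static_main (u := ExtCoord.pos s) (v := ExtCoord.pos t) rfl rfl (by simp) c' h1
          (fun d hP => classifyT2 hst c' h1 d hP)
  obtain ⟨hfin, hcard, hinit⟩ := hstat
  obtain ⟨sq, hconv, hterm⟩ := hf
  have hcle := counts_le (cluster c') hfin
    (fun g hg d => mem_cluster_iff_of_mem hg d) sq.seq sq.len sq.basic (fSolved L)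
    (fun γ => (hinit γ).le) sq.len le_rfl
  have hrun : run sq.seq (fSolved L) sq.len = f := hterm
  rw [hrun] at hcle
  have hleg : ∀ d, f d ≠ none := by rw [← hterm]; exact hconv
  have hsub : ∀ γ : Color, {d ∈ cluster c' | f d = some γ} ⊆ cluster c' := fun γ d hd => hd.1
  have hcov : cluster c' ⊆ {d ∈ cluster c' | f d = some Color.red}
      ∪ ({d ∈ cluster c' | f d = some Color.white}
      ∪ ({d ∈ cluster c' | f d = some Color.green}
      ∪ ({d ∈ cluster c' | f d = some Color.orange}
      ∪ ({d ∈ cluster c' | f d = some Color.yellow}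
      ∪ {d ∈ cluster c' | f d = some Color.blue})))) := by
    intro d hd
    rcases ho : f d with _ | γ0
    · exact absurd ho (hleg d)
    · cases γ0
      · exact Or.inl ⟨hd, ho⟩
      · exact Or.inr (Or.inl ⟨hd, ho⟩)
      · exact Or.inr (Or.inr (Or.inl ⟨hd, ho⟩))
      · exact Or.inr (Or.inr (Or.inr (Or.inl ⟨hd, ho⟩)))
      · exact Or.inr (Or.inr (Or.inr (Or.inr (Or.inl ⟨hd, ho⟩))))
      · exact Or.inr (Or.inr (Or.inr (Or.inr (Or.inr ⟨hd, ho⟩))))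
  have h24 : 24 ≤ {d ∈ cluster c' | f d = some Color.red}.ncard
      + ({d ∈ cluster c' | f d = some Color.white}.ncard
      + ({d ∈ cluster c' | f d = some Color.green}.ncard
      + ({d ∈ cluster c' | f d = some Color.orange}.ncard
      + ({d ∈ cluster c' | f d = some Color.yellow}.ncard
      + {d ∈ cluster c' | f d = some Color.blue}.ncard)))) := by
    refine le_trans hcard (le_trans (Set.ncard_le_ncard hcov ?_) ?_)
    · exact (hfin.subset (hsub _)).union ((hfin.subset (hsub _)).union
        ((hfin.subset (hsub _)).union ((hfin.subset (hsub _)).union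
        ((hfin.subset (hsub _)).union (hfin.subset (hsub _))))))
    · refine le_trans (Set.ncard_union_le _ _) ?_
      gcongr
      refine le_trans (Set.ncard_union_le _ _) ?_
      gcongr
      refine le_trans (Set.ncard_union_le _ _) ?_
      gcongr
      refine le_trans (Set.ncard_union_le _ _) ?_
      gcongr
      exact Set.ncard_union_le _ _
  have b1 := hcle Color.red
  have b2 := hcle Color.white
  have b3 := hcle Color.green
  have b4 := hcle Color.orange
  have b5 := hcle Color.yellow
  have b6 := hcle Color.blue
  cases γ
  · exact le_antisymm b1 (by omega)
  · exact le_antisymm b2 (by omega)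
  · exact le_antisymm b3 (by omega)
  · exact le_antisymm b4 (by omega)
  · exact le_antisymm b5 (by omega)
  · exact le_antisymm b6 (by omega)
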